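/- Define the reduced transition rates Q_{kl}(ε) = ∑_{i∈S_k} ∑_{j∈S_l} μ^k(i,ε) q_{ij}(ε) for clusters S_k ≠ S_l, where μ^k(·,ε) is the stationary distribution of the chain restricted to S_k. If the original family q_{ij}(ε) is completely asymptotically regular, then for any two pairs (k,l), (m,n) with k ≠ l, m ≠ n and with S_k = {i}, S_m = {i'} singletons, the limit lim_{ε↓0} Q_{kl}(ε)/Q_{mn}(ε) exists in [0,∞]. -/
import Mathlib


open Filter Topology Finset

/-- Reduced transition rates out of singleton clusters. If the family `q` is completely
asymptotically regular, then for singleton clusters `S_k = {i}`, `S_m = {i'}` and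
clusters `S_l = A`, `S_n = B` (with `i ∉ A`, `i' ∉ B`), the ratio
`Q_{kl}(ε)/Q_{mn}(ε) = (∑_{j∈A} q_{ij}(ε))/(∑_{j'∈B} q_{i'j'}(ε))` converges in `[0,∞]`
as `ε ↓ 0`. -/
theorem stmt11 (N : ℕ) (q : ℝ → Fin N → Fin N → ℝ)
    (hpos : ∀ ε > (0:ℝ), ∀ i j, i ≠ j → 0 < q ε i j)
    (hCAR : ∀ a : ℕ, 1 ≤ a → ∀ I J K L : Fin a → Fin N,
      (∀ m, I m ≠ J m) → (∀ m, K m ≠ L m) →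
      ∃ lim : ENNReal, Tendsto
        (fun ε => ENNReal.ofReal (∏ m, q ε (I m) (J m) / q ε (K m) (L m)))
        (𝓝[>] (0:ℝ)) (𝓝 lim))
    (i i' : Fin N) (A B : Finset (Fin N)) (hA : A.Nonempty) (hB : B.Nonempty)
    (hiA : i ∉ A) (hi'B : i' ∉ B) :
    ∃ L : ENNReal, Tendsto
      (fun ε => ENNReal.ofReal ((∑ j ∈ A, q ε i j) / (∑ j' ∈ B, q ε i' j')))
      (𝓝[>] (0:ℝ)) (𝓝 L) := by
  have key : ∀ j ∈ A, ∀ k ∈ B, ∃ l : ENNReal,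
      Tendsto (fun ε => ENNReal.ofReal (q ε i j / q ε i' k)) (𝓝[>] (0:ℝ)) (𝓝 l) := by
    intro j hj k hk
    obtain ⟨l, hl⟩ := hCAR 1 le_rfl (fun _ => i) (fun _ => j) (fun _ => i') (fun _ => k)
      (fun m h => hiA ((show i = j from h) ▸ hj)) (fun m h => hi'B ((show i' = k from h) ▸ hk))
    exact ⟨l, by simpa using hl⟩
  choose! L hL using key
  refine ⟨(∑ k ∈ B, (∑ j ∈ A, L j k)⁻¹)⁻¹, ?_⟩
  have h1 : Tendsto
      (fun ε => (∑ k ∈ B, (∑ j ∈ A, ENNReal.ofReal (q ε i j / q ε i' k))⁻¹)⁻¹)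
      (𝓝[>] (0:ℝ)) (𝓝 (∑ k ∈ B, (∑ j ∈ A, L j k)⁻¹)⁻¹) := by
    apply ENNReal.tendsto_inv_iff.2
    apply tendsto_finset_sum
    intro k hk
    exact ENNReal.tendsto_inv_iff.2 (tendsto_finset_sum _ (fun j hj => hL j hj k hk))
  refine h1.congr' ?_
  filter_upwards [self_mem_nhdsWithin] with ε hε
  simp only [Set.mem_Ioi] at hε
  have hqA : ∀ j ∈ A, 0 < q ε i j := fun j hj => hpos ε hε i j (fun h => hiA (h ▸ hj))
  have hqB : ∀ k ∈ B, 0 < q ε i' k := fun k hk => hpos ε hε i' k (fun h => hi'B (h ▸ hk))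
  have ha : 0 < ∑ j ∈ A, q ε i j := Finset.sum_pos hqA hA
  have hb : 0 < ∑ k ∈ B, q ε i' k := Finset.sum_pos hqB hB
  have haE : ENNReal.ofReal (∑ j ∈ A, q ε i j) ≠ 0 := by
    simpa using ha
  have haT : ENNReal.ofReal (∑ j ∈ A, q ε i j) ≠ ⊤ := ENNReal.ofReal_ne_top
  have step1 : ∀ k ∈ B,
      (∑ j ∈ A, ENNReal.ofReal (q ε i j / q ε i' k))⁻¹
        = ENNReal.ofReal (q ε i' k) / ENNReal.ofReal (∑ j ∈ A, q ε i j) := by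
    intro k hk
    have hc := hqB k hk
    have : ∑ j ∈ A, ENNReal.ofReal (q ε i j / q ε i' k)
        = ENNReal.ofReal (∑ j ∈ A, q ε i j) / ENNReal.ofReal (q ε i' k) := by
      rw [← ENNReal.ofReal_sum_of_nonneg
        (fun j hj => div_nonneg (hqA j hj).le hc.le), ← Finset.sum_div,
        ENNReal.ofReal_div_of_pos hc]
    rw [this, ENNReal.inv_div (Or.inr haT) (Or.inr haE)]
  rw [Finset.sum_congr rfl step1]
  have hsum : ∑ x ∈ B, ENNReal.ofReal (q ε i' x) / ENNReal.ofReal (∑ j ∈ A, q ε i j)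
      = ENNReal.ofReal (∑ k ∈ B, q ε i' k) / ENNReal.ofReal (∑ j ∈ A, q ε i j) := by
    simp only [div_eq_mul_inv, ← Finset.sum_mul,
      ← ENNReal.ofReal_sum_of_nonneg (fun k hk => (hqB k hk).le)]
  rw [hsum, ENNReal.inv_div (Or.inl haT) (Or.inl haE), ← ENNReal.ofReal_div_of_pos hb]
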